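/- On the Cartesian torus grid, let W_{ij} ∈ L¹(T^d) (i,j = 1,…,n) satisfy the symmetry W_{ij}(x) = W_{ji}(−x) for a.e. x ∈ T^d and the positive semidefiniteness ∑_{i,j=1}^n ∫_{T^d}∫_{T^d} W_{ij}(x−y)·v_i(x)·v_j(y) dx dy ≥ 0 for all v_1,…,v_n ∈ L²(T^d). Let u_i : G → ℝ and let p_i be the fully implicit discrete potential p_i(K) = ∑_{j=1}^n ∑_{J∈G} m(J)·W^{ij}_{KJ}·u_j(J). Then the discrete cross term is nonnegative: X(u,p) = ∑_{i=1}^n ∑_{σ∈E} τ_σ·(D_{K,σ}p_i)·(D_{K,σ}u_i) ≥ 0. -/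

import Mathlib

open MeasureTheory Real Finset

namespace SG

instance : Fact ((0:ℝ) < 1) := ⟨one_pos⟩

variable {d : ℕ}

/-- Cells of the Cartesian torus grid. -/
abbrev Cell (M : Fin d → ℕ) := ∀ ℓ : Fin d, ZMod (M ℓ)

/-- Cell measure `m(K) = Δx₁⋯Δx_d`. -/
noncomputable def mK (M : Fin d → ℕ) : ℝ := ∏ ℓ, ((M ℓ : ℝ))⁻¹

/-- Transmissibility coefficient of an edge in direction `ℓ`:
`τ_σ = m(σ)/d_σ = m(K)·M_ℓ²`. -/
noncomputable def τ (M : Fin d → ℕ) (ℓ : Fin d) : ℝ := mK M * (M ℓ : ℝ) ^ 2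

/-- Shift a cell by `s` in direction `ℓ` (mod `M ℓ`). -/
def shift (M : Fin d → ℕ) (K : Cell M) (ℓ : Fin d) (s : ℤ) : Cell M :=
  Function.update K ℓ (K ℓ + (s : ZMod (M ℓ)))

/-- Hypothesis (H2): `B` is continuous on `[0,∞)` with `0 < B(s) ≤ 1` for `s ≥ 0`. -/
def H2 (B : ℝ → ℝ) : Prop :=
  ContinuousOn B (Set.Ici 0) ∧ ∀ s : ℝ, 0 ≤ s → 0 < B s ∧ B s ≤ 1

/-- Hypothesis (H3): `α ∈ [0,1)` and `B(s) ≥ 1 − α·s` for all `s ≥ 0`. -/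
def H3 (B : ℝ → ℝ) (α : ℝ) : Prop :=
  0 ≤ α ∧ α < 1 ∧ ∀ s : ℝ, 0 ≤ s → 1 - α * s ≤ B s

/-- The scaled weight function `B_κ(s) = κ·B(s/κ)`. -/
noncomputable def Bk (κ : ℝ) (B : ℝ → ℝ) (s : ℝ) : ℝ := κ * B (s / κ)

/-- Upwind value on the (oriented) edge from `K` to `L`. -/
noncomputable def upw {M : Fin d → ℕ} (u p : Cell M → ℝ) (K L : Cell M) : ℝ :=
  if 0 ≤ p L - p K then u L else u K

/-- Numerical flux `F_{K,σ}[u,p]` from `K` through the edge (in direction `ℓ`) to its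
neighbor `L`. -/
noncomputable def flux (M : Fin d → ℕ) (κ : ℝ) (B : ℝ → ℝ) (u p : Cell M → ℝ)
    (ℓ : Fin d) (K L : Cell M) : ℝ :=
  -(τ M ℓ) * (Bk κ B |p L - p K| * (u L - u K) + upw u p K L * (p L - p K))

/-- Sum of the numerical fluxes over the `2d` edges incident to `K`. -/
noncomputable def fluxSum (M : Fin d → ℕ) (κ : ℝ) (B : ℝ → ℝ) (u p : Cell M → ℝ)
    (K : Cell M) : ℝ :=
  ∑ ℓ : Fin d, (flux M κ B u p ℓ K (shift M K ℓ 1) + flux M κ B u p ℓ K (shift M K ℓ (-1)))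

/-- One implicit Euler finite-volume step with prescribed potential `p`. -/
def Step (M : Fin d → ℕ) (κ Δt : ℝ) (B : ℝ → ℝ) (uPrev u p : Cell M → ℝ) : Prop :=
  ∀ K : Cell M, mK M * (u K - uPrev K) / Δt + fluxSum M κ B u p K = 0

/-- Discrete Boltzmann entropy. -/
noncomputable def HB (M : Fin d → ℕ) [∀ ℓ, NeZero (M ℓ)] {n : ℕ}
    (u : Fin n → Cell M → ℝ) : ℝ :=
  ∑ i, ∑ K : Cell M, mK M * (u i K * (Real.log (u i K) - 1))

/-- Discrete Rao entropy associated to discrete kernels `Wd`. -/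
noncomputable def HR (M : Fin d → ℕ) [∀ ℓ, NeZero (M ℓ)] {n : ℕ}
    (Wd : Fin n → Fin n → Cell M → Cell M → ℝ) (u : Fin n → Cell M → ℝ) : ℝ :=
  (1/2) * ∑ i, ∑ j, ∑ K : Cell M, ∑ J : Cell M,
    mK M * mK M * Wd i j K J * u i K * u j J

/-- Boltzmann entropy production term `P_B`. -/
noncomputable def PB (M : Fin d → ℕ) [∀ ℓ, NeZero (M ℓ)] {n : ℕ} (κ : ℝ) (B : ℝ → ℝ)
    (u p : Fin n → Cell M → ℝ) : ℝ :=
  4 * ∑ i, ∑ K : Cell M, ∑ ℓ : Fin d,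
    τ M ℓ * Bk κ B |p i (shift M K ℓ 1) - p i K| *
      (Real.sqrt (u i (shift M K ℓ 1)) - Real.sqrt (u i K)) ^ 2

/-- Rao entropy production term `P_R`. -/
noncomputable def PR (M : Fin d → ℕ) [∀ ℓ, NeZero (M ℓ)] {n : ℕ}
    (u p : Fin n → Cell M → ℝ) : ℝ :=
  ∑ i, ∑ K : Cell M, ∑ ℓ : Fin d,
    τ M ℓ * upw (u i) (p i) K (shift M K ℓ 1) * (p i (shift M K ℓ 1) - p i K) ^ 2

/-- Cross term `X(u,p)`. -/
noncomputable def Xc (M : Fin d → ℕ) [∀ ℓ, NeZero (M ℓ)] {n : ℕ}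
    (u p : Fin n → Cell M → ℝ) : ℝ :=
  ∑ i, ∑ K : Cell M, ∑ ℓ : Fin d,
    τ M ℓ * (p i (shift M K ℓ 1) - p i K) * (u i (shift M K ℓ 1) - u i K)

/-- Discrete Fisher information `∑_i ∑_σ τ_σ |D_σ √u_i|²`. -/
noncomputable def Fisher (M : Fin d → ℕ) [∀ ℓ, NeZero (M ℓ)] {n : ℕ}
    (u : Fin n → Cell M → ℝ) : ℝ :=
  ∑ i, ∑ K : Cell M, ∑ ℓ : Fin d,
    τ M ℓ * (Real.sqrt (u i (shift M K ℓ 1)) - Real.sqrt (u i K)) ^ 2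

/-- The torus `T^d = (ℝ/ℤ)^d`. -/
abbrev Td (d : ℕ) := Fin d → AddCircle (1 : ℝ)

/-- The box `Q_K ⊆ T^d` corresponding to the cell `K`. -/
noncomputable def QK (M : Fin d → ℕ) (K : Cell M) : Set (Td d) :=
  Set.univ.pi fun ℓ => (fun t : ℝ => (t : AddCircle (1 : ℝ))) ''
    Set.Ico (((K ℓ).val : ℝ) / (M ℓ)) ((((K ℓ).val : ℝ) + 1) / (M ℓ))

/-- The discrete kernel `W_{KJ} = (m(K)m(J))⁻¹ ∫_{Q_K}∫_{Q_J} W(x−y) dy dx`. -/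
noncomputable def Wdisc (M : Fin d → ℕ) (W : Td d → ℝ) (K J : Cell M) : ℝ :=
  (mK M * mK M)⁻¹ * ∫ x in QK M K, ∫ y in QK M J, W (x - y)

/-- The discrete nonlocal potential `p_i(K) = ∑_j ∑_J m(J)·Wd^{ij}_{KJ}·u_j(J)`. -/
noncomputable def pot (M : Fin d → ℕ) [∀ ℓ, NeZero (M ℓ)] {n : ℕ}
    (Wd : Fin n → Fin n → Cell M → Cell M → ℝ) (u : Fin n → Cell M → ℝ)
    (i : Fin n) (K : Cell M) : ℝ :=
  ∑ j, ∑ J : Cell M, mK M * Wd i j K J * u j J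

/-- Discrete `L^q` norm of a cell function. -/
noncomputable def normq (M : Fin d → ℕ) [∀ ℓ, NeZero (M ℓ)] (q : ℝ)
    (u : Cell M → ℝ) : ℝ :=
  (∑ K : Cell M, mK M * |u K| ^ q) ^ (1/q)

/-- Discrete `L^q` norm of an edge function (dual-cell measure `m(Δ_σ) = m(σ)·d_σ = m(K)`). -/
noncomputable def enorm (M : Fin d → ℕ) [∀ ℓ, NeZero (M ℓ)] (q : ℝ)
    (w : Cell M → Fin d → ℝ) : ℝ :=
  (∑ K : Cell M, ∑ ℓ : Fin d, mK M * |w K ℓ| ^ q) ^ (1/q)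

/-- Magnitude of the discrete gradient on the edge `(K,ℓ)`:
`|∇^h_σ v| = d·D_σ v/d_σ`. -/
noncomputable def gradh (M : Fin d → ℕ) (v : Cell M → ℝ) (K : Cell M) (ℓ : Fin d) : ℝ :=
  d * (M ℓ : ℝ) * |v (shift M K ℓ 1) - v K|


/-! ### Auxiliary lemmas for the cross-term theorem -/

instance : IsProbabilityMeasure (volume : Measure (AddCircle (1:ℝ))) :=
  ⟨by rw [AddCircle.measure_univ]; simp⟩

set_option synthInstance.maxHeartbeats 1000000 in
instance negInvAC : (volume : Measure (AddCircle (1:ℝ))).IsNegInvariant := inferInstance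

lemma coe_int_eq_zero (n : ℤ) : ((n : ℝ) : AddCircle (1:ℝ)) = 0 :=
  (AddCircle.coe_eq_zero_iff _).2 ⟨n, by simp⟩

lemma image_Ico_add_int (a b : ℝ) (n : ℤ) :
    (fun t : ℝ => (t : AddCircle (1:ℝ))) '' Set.Ico (a + n) (b + n)
      = (fun t : ℝ => (t : AddCircle (1:ℝ))) '' Set.Ico a b := by
  rw [show Set.Ico (a + (n:ℝ)) (b + n) = (fun t => t + (n:ℝ)) '' Set.Ico a b by
    rw [Set.image_add_const_Ico]]
  rw [Set.image_image]
  refine Set.image_congr fun x _ => ?_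
  show ((x + (n:ℝ) : ℝ) : AddCircle (1:ℝ)) = (x : AddCircle (1:ℝ))
  rw [AddCircle.coe_add, coe_int_eq_zero, add_zero]

lemma image_Ico_add_const (a b c : ℝ) :
    (fun t : ℝ => (t : AddCircle (1:ℝ))) '' Set.Ico (a + c) (b + c)
      = (fun y => y + ((c : ℝ) : AddCircle (1:ℝ))) ''
          ((fun t : ℝ => (t : AddCircle (1:ℝ))) '' Set.Ico a b) := by
  rw [← Set.image_add_const_Ico, Set.image_image, Set.image_image]
  refine Set.image_congr fun x _ => ?_
  show ((x + c : ℝ) : AddCircle (1:ℝ)) = (x : AddCircle (1:ℝ)) + (c : AddCircle (1:ℝ))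
  rw [AddCircle.coe_add]

lemma mem_image_shift (y : AddCircle (1:ℝ)) (a b c : ℝ) (n : ℤ) :
    y + ((c : ℝ) : AddCircle (1:ℝ)) ∈
        (fun t : ℝ => (t : AddCircle (1:ℝ))) '' Set.Ico (a + c + n) (b + c + n)
      ↔ y ∈ (fun t : ℝ => (t : AddCircle (1:ℝ))) '' Set.Ico a b := by
  rw [image_Ico_add_int (a + c) (b + c) n, image_Ico_add_const]
  exact Function.Injective.mem_set_image (add_left_injective _)

lemma measurableSet_image_Ico (a b : ℝ) (h : b ≤ a + 1) :
    MeasurableSet ((fun t : ℝ => (t : AddCircle (1:ℝ))) '' Set.Ico a b) := by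
  have key : (fun t : ℝ => (t : AddCircle (1:ℝ))) '' Set.Ico a b
      = (AddCircle.measurableEquivIco 1 a) ⁻¹' {z : Set.Ico a (a+1) | (z : ℝ) < b} := by
    ext y
    constructor
    · rintro ⟨x, hx, rfl⟩
      have hx' : x ∈ Set.Ico a (a + 1) := ⟨hx.1, lt_of_lt_of_le hx.2 h⟩
      have he : AddCircle.equivIco 1 a (↑x) = ⟨x, hx'⟩ := by
        rw [Equiv.apply_eq_iff_eq_symm_apply]; rfl
      simp only [AddCircle.measurableEquivIco, MeasurableEquiv.coe_mk, Set.mem_preimage,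
        Set.mem_setOf_eq, he]
      show ((AddCircle.equivIco 1 a (↑x) : Set.Ico a (a+1)) : ℝ) < b
      rw [he]
      exact hx.2
    · intro hy
      refine ⟨(AddCircle.equivIco 1 a y : ℝ),
        ⟨(AddCircle.equivIco 1 a y).2.1, hy⟩, ?_⟩
      exact (AddCircle.equivIco 1 a).symm_apply_apply y
  rw [key]
  exact (AddCircle.measurableEquivIco 1 a).measurable
    (measurable_subtype_coe measurableSet_Iio)

variable {d : ℕ}

lemma measurableSet_QK (M : Fin d → ℕ) [∀ ℓ, NeZero (M ℓ)] (K : Cell M) :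
    MeasurableSet (QK M K) := by
  refine MeasurableSet.univ_pi fun ℓ => measurableSet_image_Ico _ _ ?_
  have hm0 : (0:ℝ) < (M ℓ : ℝ) := by
    exact_mod_cast Nat.pos_of_ne_zero (NeZero.ne (M ℓ))
  have hm1 : (1:ℝ) ≤ (M ℓ : ℝ) := by
    exact_mod_cast Nat.one_le_iff_ne_zero.2 (NeZero.ne (M ℓ))
  rw [div_le_iff₀ hm0, add_mul, div_mul_cancel₀ _ (ne_of_gt hm0)]
  nlinarith

/-- Positivity of the cell measure. -/
lemma mK_pos (M : Fin d → ℕ) [∀ ℓ, NeZero (M ℓ)] : 0 < mK M := by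
  refine Finset.prod_pos fun ℓ _ => ?_
  have : (0:ℝ) < (M ℓ : ℝ) := by exact_mod_cast Nat.pos_of_ne_zero (NeZero.ne (M ℓ))
  positivity

lemma τ_nonneg (M : Fin d → ℕ) [∀ ℓ, NeZero (M ℓ)] (ℓ : Fin d) : 0 ≤ τ M ℓ := by
  have := mK_pos M
  unfold τ; positivity

/-- The translation vector of one cell in direction `ℓ`. -/
noncomputable def tv (M : Fin d → ℕ) (ℓ : Fin d) : Td d :=
  fun m => if m = ℓ then (((M ℓ : ℝ)⁻¹ : ℝ) : AddCircle (1:ℝ)) else 0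


lemma mem_QK_shift (M : Fin d → ℕ) [∀ ℓ, NeZero (M ℓ)] (K : Cell M) (ℓ : Fin d)
    (x : Td d) : x + tv M ℓ ∈ QK M (shift M K ℓ 1) ↔ x ∈ QK M K := by
  simp only [QK, Set.mem_univ_pi]
  refine forall_congr' fun m => ?_
  by_cases hm : m = ℓ
  · subst hm
    have hx : (x + tv M m) m = x m + (((M m : ℝ)⁻¹ : ℝ) : AddCircle (1:ℝ)) := by
      simp [tv]
    have hK : shift M K m 1 m = K m + 1 := by simp [shift]
    rw [hx, hK]
    set k : ℕ := (K m).val with hk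
    set v : ℕ := (K m + 1).val with hv
    have hmod : v ≡ k + 1 [MOD M m] := by
      rw [hv, ZMod.val_add, ZMod.val_one_eq_one_mod]
      calc (k + 1 % M m) % M m ≡ k + 1 % M m [MOD M m] := Nat.mod_modEq _ _
        _ ≡ k + 1 [MOD M m] := Nat.ModEq.add_left k (Nat.mod_modEq 1 (M m))
    obtain ⟨t, ht⟩ := hmod.dvd
    -- ht : (k+1 : ℤ) - v = (M m) * t
    have hM0 : ((M m : ℝ)) ≠ 0 := by
      exact_mod_cast NeZero.ne (M m)
    have hvR : (v : ℝ) = (k : ℝ) + 1 - (M m) * t := by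
      have : ((k:ℤ) + 1 : ℤ) - (v:ℤ) = (M m : ℤ) * t := by exact_mod_cast ht
      have := congrArg (fun z : ℤ => (z : ℝ)) this
      push_cast at this
      linarith
    have e1 : (v : ℝ) / (M m) = (k : ℝ) / (M m) + ((M m : ℝ))⁻¹ + ((-t : ℤ) : ℝ) := by
      rw [hvR]; push_cast; field_simp; ring
    have e2 : ((v : ℝ) + 1) / (M m)
        = ((k : ℝ) + 1) / (M m) + ((M m : ℝ))⁻¹ + ((-t : ℤ) : ℝ) := by
      rw [hvR]; push_cast; field_simp; ring
    rw [e1, e2]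
    exact mem_image_shift (x m) ((k : ℝ) / (M m)) (((k : ℝ) + 1) / (M m)) ((M m : ℝ))⁻¹ (-t)
  · have hx : (x + tv M ℓ) m = x m := by simp [tv, hm]
    have hK : shift M K ℓ 1 m = K m := by simp [shift, Function.update_of_ne hm]
    rw [hx, hK]

lemma setIntegral_QK_shift (M : Fin d → ℕ) [∀ ℓ, NeZero (M ℓ)] (K : Cell M) (ℓ : Fin d)
    (f : Td d → ℝ) :
    ∫ x in QK M (shift M K ℓ 1), f x = ∫ x in QK M K, f (x + tv M ℓ) := by
  rw [← integral_indicator (measurableSet_QK M _), ← integral_indicator (measurableSet_QK M K),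
    ← integral_add_right_eq_self (fun x => (QK M (shift M K ℓ 1)).indicator f x) (tv M ℓ)]
  congr 1; funext x
  by_cases h : x ∈ QK M K
  · rw [Set.indicator_of_mem ((mem_QK_shift M K ℓ x).2 h), Set.indicator_of_mem h]
  · rw [Set.indicator_of_notMem (fun hc => h ((mem_QK_shift M K ℓ x).1 hc)),
      Set.indicator_of_notMem h]

lemma shift_shift_cancel (M : Fin d → ℕ) (K : Cell M) (ℓ : Fin d) (s : ℤ) :
    shift M (shift M K ℓ s) ℓ (-s) = K := by
  funext m
  by_cases hm : m = ℓ
  · subst hm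
    simp [shift]
  · simp [shift, Function.update_of_ne hm]

/-- The shift in direction `ℓ` as an equivalence of cells. -/
def shiftEquiv (M : Fin d → ℕ) (ℓ : Fin d) : Cell M ≃ Cell M where
  toFun K := shift M K ℓ 1
  invFun K := shift M K ℓ (-1)
  left_inv K := shift_shift_cancel M K ℓ 1
  right_inv K := by simpa using shift_shift_cancel M K ℓ (-1)

lemma Wdisc_shift (M : Fin d → ℕ) [∀ ℓ, NeZero (M ℓ)] (W : Td d → ℝ) (K J : Cell M)
    (ℓ : Fin d) :
    Wdisc M W (shift M K ℓ 1) J = Wdisc M W K (shift M J ℓ (-1)) := by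
  unfold Wdisc
  congr 1
  rw [setIntegral_QK_shift]
  have hJ : shift M (shift M J ℓ (-1)) ℓ 1 = J := by
    simpa using shift_shift_cancel M J ℓ (-1)
  refine setIntegral_congr_fun (measurableSet_QK M K) (fun x _ => ?_)
  calc ∫ y in QK M J, W (x + tv M ℓ - y)
      = ∫ y in QK M (shift M (shift M J ℓ (-1)) ℓ 1), W (x + tv M ℓ - y) := by rw [hJ]
    _ = ∫ y in QK M (shift M J ℓ (-1)), W (x + tv M ℓ - (y + tv M ℓ)) :=
        setIntegral_QK_shift M _ ℓ _
    _ = ∫ y in QK M (shift M J ℓ (-1)), W (x - y) := by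
        refine setIntegral_congr_fun (measurableSet_QK M _) (fun y _ => ?_)
        congr 1
        abel

lemma integrable_W_sub_left {W : Td d → ℝ} (hW : Integrable W) (x : Td d) :
    Integrable (fun y : Td d => W (x - y)) := by
  have h := (Measure.measurePreserving_sub_left (volume : Measure (Td d)) x)
  exact (h.integrable_comp hW.aestronglyMeasurable).2 hW

lemma integrable_W_prod {W : Td d → ℝ} (hW : Integrable W) :
    Integrable (fun z : Td d × Td d => W (z.1 - z.2))
      ((volume : Measure (Td d)).prod volume) := by
  have hfst : MeasurePreserving (Prod.fst : Td d × Td d → Td d)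
      ((volume : Measure (Td d)).prod volume) volume := by
    refine ⟨measurable_fst, ?_⟩
    rw [Measure.map_fst_prod]
    simp
  have hsub : MeasurePreserving (fun z : Td d × Td d => z.1 - z.2)
      ((volume : Measure (Td d)).prod volume) volume := by
    have := (measurePreserving_sub_prod (volume : Measure (Td d)) volume)
    exact hfst.comp this
  exact (hsub.integrable_comp hW.aestronglyMeasurable).2 hW

lemma integrable_inner_integral (M : Fin d → ℕ) [∀ ℓ, NeZero (M ℓ)]
    {W : Td d → ℝ} (hW : Integrable W) (J : Cell M) :
    Integrable (fun x : Td d => ∫ y in QK M J, W (x - y)) := by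
  have hF : Integrable ((Set.univ ×ˢ QK M J).indicator fun z : Td d × Td d => W (z.1 - z.2))
      ((volume : Measure (Td d)).prod volume) :=
    (integrable_W_prod hW).indicator (MeasurableSet.univ.prod (measurableSet_QK M J))
  have h := hF.integral_prod_left
  have heq : (fun x : Td d => ∫ y,
      (Set.univ ×ˢ QK M J).indicator (fun z : Td d × Td d => W (z.1 - z.2)) (x, y))
      = fun x : Td d => ∫ y in QK M J, W (x - y) := by
    funext x
    rw [← integral_indicator (measurableSet_QK M J)]
    congr 1
    funext y
    by_cases hy : y ∈ QK M J
    · rw [Set.indicator_of_mem hy, Set.indicator_of_mem (by simp [hy])]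
    · rw [Set.indicator_of_notMem hy, Set.indicator_of_notMem (by simp [hy])]
  rwa [heq] at h

lemma double_integral_expand (M : Fin d → ℕ) [∀ ℓ, NeZero (M ℓ)]
    {W : Td d → ℝ} (hW : Integrable W) (a b : Cell M → ℝ) :
    ∫ x : Td d, ∫ y : Td d, W (x - y)
        * (∑ K : Cell M, (QK M K).indicator (fun _ => a K) x)
        * (∑ J : Cell M, (QK M J).indicator (fun _ => b J) y)
      = ∑ K : Cell M, ∑ J : Cell M, a K * b J
          * ∫ x in QK M K, ∫ y in QK M J, W (x - y) := by
  have step1 : ∀ x : Td d, ∫ y : Td d, W (x - y)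
        * (∑ K : Cell M, (QK M K).indicator (fun _ => a K) x)
        * (∑ J : Cell M, (QK M J).indicator (fun _ => b J) y)
      = ∑ K : Cell M, ∑ J : Cell M, (QK M K).indicator
          (fun _ => a K * (b J * ∫ y in QK M J, W (x - y))) x := by
    intro x
    have hint : ∀ J : Cell M, J ∈ (Finset.univ : Finset (Cell M)) → Integrable
        (fun y => (QK M J).indicator
          (fun y' => (∑ K : Cell M, (QK M K).indicator (fun _ => a K) x)
            * (b J * W (x - y'))) y) := by
      intro J _
      exact ((((integrable_W_sub_left hW x).const_mul (b J)).const_mul _).indicator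
        (measurableSet_QK M J))
    calc ∫ y : Td d, W (x - y)
        * (∑ K : Cell M, (QK M K).indicator (fun _ => a K) x)
        * (∑ J : Cell M, (QK M J).indicator (fun _ => b J) y)
        = ∫ y : Td d, ∑ J : Cell M, (QK M J).indicator
            (fun y' => (∑ K : Cell M, (QK M K).indicator (fun _ => a K) x)
              * (b J * W (x - y'))) y := by
          congr 1; funext y
          rw [Finset.mul_sum]
          refine Finset.sum_congr rfl fun J _ => ?_
          by_cases hy : y ∈ QK M J
          · rw [Set.indicator_of_mem hy, Set.indicator_of_mem hy]; ring
          · rw [Set.indicator_of_notMem hy, Set.indicator_of_notMem hy, mul_zero]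
      _ = ∑ J : Cell M, ∫ y : Td d, (QK M J).indicator
            (fun y' => (∑ K : Cell M, (QK M K).indicator (fun _ => a K) x)
              * (b J * W (x - y'))) y := integral_finset_sum _ hint
      _ = ∑ J : Cell M, (∑ K : Cell M, (QK M K).indicator (fun _ => a K) x)
            * (b J * ∫ y in QK M J, W (x - y)) := by
          refine Finset.sum_congr rfl fun J _ => ?_
          rw [integral_indicator (measurableSet_QK M J), integral_const_mul,
            integral_const_mul]
      _ = ∑ K : Cell M, ∑ J : Cell M, (QK M K).indicator
            (fun _ => a K * (b J * ∫ y in QK M J, W (x - y))) x := by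
          rw [Finset.sum_comm]
          refine Finset.sum_congr rfl fun J _ => ?_
          rw [Finset.sum_mul]
          refine Finset.sum_congr rfl fun K _ => ?_
          by_cases hx : x ∈ QK M K
          · rw [Set.indicator_of_mem hx, Set.indicator_of_mem hx]
          · rw [Set.indicator_of_notMem hx, Set.indicator_of_notMem hx, zero_mul]
  calc ∫ x : Td d, ∫ y : Td d, W (x - y)
        * (∑ K : Cell M, (QK M K).indicator (fun _ => a K) x)
        * (∑ J : Cell M, (QK M J).indicator (fun _ => b J) y)
      = ∫ x : Td d, ∑ K : Cell M, ∑ J : Cell M, (QK M K).indicator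
          (fun _ => a K * (b J * ∫ y in QK M J, W (x - y))) x := by
        congr 1; funext x; exact step1 x
    _ = ∫ x : Td d, ∑ K : Cell M, ∑ J : Cell M, (QK M K).indicator
          (fun x' => a K * (b J * ∫ y in QK M J, W (x' - y))) x := by
        refine integral_congr_ae (Filter.Eventually.of_forall fun x => ?_)
        refine Finset.sum_congr rfl fun K _ => Finset.sum_congr rfl fun J _ => ?_
        by_cases hx : x ∈ QK M K
        · rw [Set.indicator_of_mem hx, Set.indicator_of_mem hx]
        · rw [Set.indicator_of_notMem hx, Set.indicator_of_notMem hx]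
    _ = ∑ K : Cell M, ∑ J : Cell M, ∫ x : Td d, (QK M K).indicator
          (fun x' => a K * (b J * ∫ y in QK M J, W (x' - y))) x := by
        have hterm : ∀ K J : Cell M, Integrable (fun x : Td d => (QK M K).indicator
            (fun x' => a K * (b J * ∫ y in QK M J, W (x' - y))) x) := fun K J =>
          (((integrable_inner_integral M hW J).const_mul (b J)).const_mul
            (a K)).indicator (measurableSet_QK M K)
        rw [integral_finset_sum _ (fun K _ => integrable_finset_sum _ fun J _ => hterm K J)]
        exact Finset.sum_congr rfl fun K _ => integral_finset_sum _ fun J _ => hterm K J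
    _ = ∑ K : Cell M, ∑ J : Cell M, a K * b J
          * ∫ x in QK M K, ∫ y in QK M J, W (x - y) := by
        refine Finset.sum_congr rfl fun K _ => Finset.sum_congr rfl fun J _ => ?_
        rw [integral_indicator (measurableSet_QK M K), integral_const_mul,
          integral_const_mul]
        ring

/-- nonnegativity of the discrete cross term for symmetric positive
semidefinite kernels and fully implicit potentials. -/
theorem cross_term_nonneg {d n : ℕ} (M : Fin d → ℕ) [∀ ℓ, NeZero (M ℓ)]
    (W : Fin n → Fin n → Td d → ℝ)
    (hW : ∀ i j, MeasureTheory.Integrable (W i j))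
    (hsym : ∀ i j, ∀ᵐ x : Td d, W i j x = W j i (-x))
    (hpsd : ∀ v : Fin n → Td d → ℝ, (∀ i, MeasureTheory.MemLp (v i) 2) →
      0 ≤ ∑ i, ∑ j, ∫ x : Td d, ∫ y : Td d, W i j (x - y) * v i x * v j y)
    (u : Fin n → Cell M → ℝ) :
    0 ≤ Xc M u (pot M (fun i j => Wdisc M (W i j)) u) := by
  classical
  have hmK := mK_pos M
  have hmKne : mK M ≠ 0 := ne_of_gt hmK
  have hX : Xc M u (pot M (fun i j => Wdisc M (W i j)) u)
      = ∑ ℓ : Fin d, ∑ i, ∑ K : Cell M,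
          τ M ℓ * (pot M (fun i j => Wdisc M (W i j)) u i (shift M K ℓ 1)
            - pot M (fun i j => Wdisc M (W i j)) u i K)
          * (u i (shift M K ℓ 1) - u i K) := by
    simp only [Xc]
    rw [show (∑ i, ∑ K : Cell M, ∑ ℓ : Fin d,
        τ M ℓ * (pot M (fun i j => Wdisc M (W i j)) u i (shift M K ℓ 1)
          - pot M (fun i j => Wdisc M (W i j)) u i K)
        * (u i (shift M K ℓ 1) - u i K))
        = ∑ i, ∑ ℓ : Fin d, ∑ K : Cell M,
        τ M ℓ * (pot M (fun i j => Wdisc M (W i j)) u i (shift M K ℓ 1)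
          - pot M (fun i j => Wdisc M (W i j)) u i K)
        * (u i (shift M K ℓ 1) - u i K)
      from Finset.sum_congr rfl fun i _ => Finset.sum_comm]
    exact Finset.sum_comm
  rw [hX]
  refine Finset.sum_nonneg fun ℓ _ => ?_
  -- the piecewise constant difference functions
  have hv : ∀ i, MemLp (fun x : Td d => ∑ K : Cell M,
      (QK M K).indicator (fun _ => u i (shift M K ℓ 1) - u i K) x) 2
      (volume : Measure (Td d)) := by
    intro i
    have heq : (fun x : Td d => ∑ K : Cell M,
        (QK M K).indicator (fun _ => u i (shift M K ℓ 1) - u i K) x)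
        = ∑ K : Cell M, (QK M K).indicator (fun _ => u i (shift M K ℓ 1) - u i K) := by
      funext x; simp [Finset.sum_apply]
    rw [heq]
    exact memLp_finset_sum' _ fun K _ =>
      memLp_indicator_const 2 (measurableSet_QK M K) _ (Or.inr (measure_ne_top _ _))
  have hS : 0 ≤ ∑ i, ∑ j, ∫ x : Td d, ∫ y : Td d, W i j (x - y)
      * (∑ K : Cell M, (QK M K).indicator (fun _ => u i (shift M K ℓ 1) - u i K) x)
      * (∑ J : Cell M, (QK M J).indicator (fun _ => u j (shift M J ℓ 1) - u j J) y) :=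
    hpsd _ hv
  -- expansion of each double integral
  have hexp : ∀ i j, (∫ x : Td d, ∫ y : Td d, W i j (x - y)
      * (∑ K : Cell M, (QK M K).indicator (fun _ => u i (shift M K ℓ 1) - u i K) x)
      * (∑ J : Cell M, (QK M J).indicator (fun _ => u j (shift M J ℓ 1) - u j J) y))
      = ∑ K : Cell M, ∑ J : Cell M,
          (u i (shift M K ℓ 1) - u i K) * (u j (shift M J ℓ 1) - u j J)
          * (mK M * mK M * Wdisc M (W i j) K J) := by
    intro i j
    rw [double_integral_expand M (hW i j) _ _]
    refine Finset.sum_congr rfl fun K _ => Finset.sum_congr rfl fun J _ => ?_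
    congr 1
    rw [Wdisc]
    field_simp
  -- the potential difference identity
  have E1 : ∀ i (K : Cell M),
      pot M (fun i j => Wdisc M (W i j)) u i (shift M K ℓ 1)
        - pot M (fun i j => Wdisc M (W i j)) u i K
      = ∑ j, ∑ J : Cell M, mK M * Wdisc M (W i j) K J
          * (u j (shift M J ℓ 1) - u j J) := by
    intro i K
    have h1 : pot M (fun i j => Wdisc M (W i j)) u i (shift M K ℓ 1)
        = ∑ j, ∑ J : Cell M, mK M * Wdisc M (W i j) K J * u j (shift M J ℓ 1) := by
      simp only [pot]
      refine Finset.sum_congr rfl fun j _ => ?_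
      calc ∑ J : Cell M, mK M * Wdisc M (W i j) (shift M K ℓ 1) J * u j J
          = ∑ J : Cell M, mK M * Wdisc M (W i j) K (shift M J ℓ (-1)) * u j J :=
            Finset.sum_congr rfl fun J _ => by rw [Wdisc_shift]
        _ = ∑ J : Cell M, mK M * Wdisc M (W i j) K J * u j (shift M J ℓ 1) := by
            refine Fintype.sum_equiv (shiftEquiv M ℓ).symm _ _ fun J => ?_
            show mK M * Wdisc M (W i j) K (shift M J ℓ (-1)) * u j J
                = mK M * Wdisc M (W i j) K (shift M J ℓ (-1))
                  * u j (shift M (shift M J ℓ (-1)) ℓ 1)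
            rw [show shift M (shift M J ℓ (-1)) ℓ 1 = J by
              simpa using shift_shift_cancel M J ℓ (-1)]
    rw [h1]
    simp only [pot]
    rw [← Finset.sum_sub_distrib]
    refine Finset.sum_congr rfl fun j _ => ?_
    rw [← Finset.sum_sub_distrib]
    exact Finset.sum_congr rfl fun J _ => by ring
  -- the key identity for the direction ℓ
  have key : ∑ i, ∑ K : Cell M,
      τ M ℓ * (pot M (fun i j => Wdisc M (W i j)) u i (shift M K ℓ 1)
        - pot M (fun i j => Wdisc M (W i j)) u i K)
      * (u i (shift M K ℓ 1) - u i K)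
      = (τ M ℓ * (mK M)⁻¹) * ∑ i, ∑ j, ∫ x : Td d, ∫ y : Td d, W i j (x - y)
        * (∑ K : Cell M, (QK M K).indicator (fun _ => u i (shift M K ℓ 1) - u i K) x)
        * (∑ J : Cell M, (QK M J).indicator (fun _ => u j (shift M J ℓ 1) - u j J) y) := by
    have hcan : (mK M)⁻¹ * (mK M * mK M) = mK M := by field_simp
    calc ∑ i, ∑ K : Cell M,
        τ M ℓ * (pot M (fun i j => Wdisc M (W i j)) u i (shift M K ℓ 1)
          - pot M (fun i j => Wdisc M (W i j)) u i K)
        * (u i (shift M K ℓ 1) - u i K)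
        = ∑ i, ∑ j, ∑ K : Cell M, ∑ J : Cell M,
            τ M ℓ * mK M * Wdisc M (W i j) K J
            * (u j (shift M J ℓ 1) - u j J) * (u i (shift M K ℓ 1) - u i K) := by
          refine Finset.sum_congr rfl fun i _ => ?_
          rw [show ∑ K : Cell M,
              τ M ℓ * (pot M (fun i j => Wdisc M (W i j)) u i (shift M K ℓ 1)
                - pot M (fun i j => Wdisc M (W i j)) u i K)
              * (u i (shift M K ℓ 1) - u i K)
              = ∑ K : Cell M, ∑ j, ∑ J : Cell M,
                τ M ℓ * mK M * Wdisc M (W i j) K J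
                * (u j (shift M J ℓ 1) - u j J) * (u i (shift M K ℓ 1) - u i K)
            from Finset.sum_congr rfl fun K _ => by
              rw [E1 i K]
              simp only [Finset.mul_sum, Finset.sum_mul]
              exact Finset.sum_congr rfl fun j _ =>
                Finset.sum_congr rfl fun J _ => by ring]
          exact Finset.sum_comm
      _ = (τ M ℓ * (mK M)⁻¹) * ∑ i, ∑ j, ∫ x : Td d, ∫ y : Td d, W i j (x - y)
          * (∑ K : Cell M, (QK M K).indicator (fun _ => u i (shift M K ℓ 1) - u i K) x)
          * (∑ J : Cell M, (QK M J).indicator (fun _ => u j (shift M J ℓ 1) - u j J) y) := by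
          rw [show ∑ i, ∑ j, ∫ x : Td d, ∫ y : Td d, W i j (x - y)
              * (∑ K : Cell M, (QK M K).indicator (fun _ => u i (shift M K ℓ 1) - u i K) x)
              * (∑ J : Cell M, (QK M J).indicator (fun _ => u j (shift M J ℓ 1) - u j J) y)
              = ∑ i, ∑ j, ∑ K : Cell M, ∑ J : Cell M,
                (u i (shift M K ℓ 1) - u i K) * (u j (shift M J ℓ 1) - u j J)
                * (mK M * mK M * Wdisc M (W i j) K J)
            from Finset.sum_congr rfl fun i _ => Finset.sum_congr rfl fun j _ => hexp i j]
          simp only [Finset.mul_sum]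
          refine Finset.sum_congr rfl fun i _ => Finset.sum_congr rfl fun j _ =>
            Finset.sum_congr rfl fun K _ => Finset.sum_congr rfl fun J _ => ?_
          calc τ M ℓ * mK M * Wdisc M (W i j) K J
              * (u j (shift M J ℓ 1) - u j J) * (u i (shift M K ℓ 1) - u i K)
              = ((mK M)⁻¹ * (mK M * mK M)) * (τ M ℓ * Wdisc M (W i j) K J
                  * (u j (shift M J ℓ 1) - u j J) * (u i (shift M K ℓ 1) - u i K)) := by
                rw [hcan]; ring
            _ = τ M ℓ * (mK M)⁻¹ * ((u i (shift M K ℓ 1) - u i K)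
                  * (u j (shift M J ℓ 1) - u j J)
                  * (mK M * mK M * Wdisc M (W i j) K J)) := by ring
  rw [key]
  exact mul_nonneg (mul_nonneg (τ_nonneg M ℓ) (inv_nonneg.2 hmK.le)) hS


end SG
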